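/- arXiv:2208.07156 — 6 statements merged into one kernel-verified Lean document; each statement's English description precedes it below -/
import Mathlib

section
/- Let σ > 0 and let F : ℝ → ℝ be bounded and measurable. Then the smoothed objective θ ↦ ∫ F(x) d(gaussianReal θ σ²)(x) is differentiable at every θ ∈ ℝ, and its derivative at θ equals ∫ F(x) · ((x − θ)/σ²) d(gaussianReal θ σ²)(x). (This is the log-likelihood-ratio gradient identity ∇_θ E_{θ'∼p(·|θ)}[F(θ')] = E[∇_θ log p(θ'|θ) · F(θ')] for a Gaussian search distribution, since the score of the Gaussian density with mean θ and variance σ² at x is (x − θ)/σ².) -/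
open MeasureTheory ProbabilityTheory Real
open scoped NNReal ENNReal

lemma aux_deriv (v : ℝ≥0) (hv : 0 < (v:ℝ)) (x t : ℝ) :
    HasDerivAt (fun μ => gaussianPDFReal μ v x) (gaussianPDFReal t v x * ((x - t) / v)) t := by
  have h0 : HasDerivAt (fun μ : ℝ => x - μ) (-1) t := by
    simpa using (hasDerivAt_id t).const_sub x
  have h1 : HasDerivAt (fun μ : ℝ => -(x - μ)^2 / (2 * v)) ((x - t) / v) t := by
    have := ((h0.pow 2).neg).div_const (2 * (v:ℝ))
    refine this.congr_deriv ?_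
    field_simp
    ring
  have h2 := (h1.exp).const_mul ((Real.sqrt (2 * π * v))⁻¹)
  refine h2.congr_deriv ?_
  simp only [gaussianPDFReal, neg_div]
  ring

lemma aux_int (t : ℝ) (v : ℝ≥0) (hv : v ≠ 0) (g : ℝ → ℝ) :
    ∫ x, g x ∂(gaussianReal t v) = ∫ x, g x * gaussianPDFReal t v x := by
  rw [gaussianReal_of_var_ne_zero t hv]
  have h : gaussianPDF t v = fun x => ((Real.toNNReal (gaussianPDFReal t v x) : ℝ≥0) : ℝ≥0∞) := by
    ext x; simp [gaussianPDF, ENNReal.ofReal]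
  rw [h, integral_withDensity_eq_integral_smul ((measurable_gaussianPDFReal t v).real_toNNReal) g]
  refine integral_congr_ae (ae_of_all _ fun x => ?_)
  simp [NNReal.smul_def, Real.coe_toNNReal _ (gaussianPDFReal_nonneg t v x), mul_comm]

lemma aux_integrable (b θ : ℝ) (hb : 0 < b) :
    Integrable (fun x : ℝ => (|x - θ| + 1) * Real.exp (-b * (x - θ)^2)) := by
  have h : Integrable (fun x : ℝ => (|x| + 1) * Real.exp (-b * x ^ 2)) := by
    have h1 := (integrable_mul_exp_neg_mul_sq hb).abs
    have h2 := integrable_exp_neg_mul_sq hb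
    refine (h1.add h2).congr (ae_of_all _ fun x => ?_)
    simp only [Pi.add_apply, abs_mul, abs_of_pos (Real.exp_pos _)]
    ring
  exact (measurePreserving_sub_right volume θ).integrable_comp h.aestronglyMeasurable |>.mpr h

/-- Log-likelihood-ratio gradient identity for a Gaussian search distribution:
the smoothed objective `θ ↦ ∫ F(x) d(gaussianReal θ σ²)(x)` is differentiable at every `θ`
with derivative `∫ F(x) · ((x − θ)/σ²) d(gaussianReal θ σ²)(x)`. -/
theorem smoothed_objective_hasDerivAt_score
    (σ : ℝ) (hσ : 0 < σ) (F : ℝ → ℝ)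
    (hF_meas : Measurable F) (hF_bdd : ∃ C : ℝ, ∀ x, |F x| ≤ C) (θ : ℝ) :
    HasDerivAt (fun t : ℝ => ∫ x, F x ∂(gaussianReal t (Real.toNNReal (σ ^ 2))))
      (∫ x, F x * ((x - θ) / σ ^ 2) ∂(gaussianReal θ (Real.toNNReal (σ ^ 2)))) θ := by
  obtain ⟨C, hC⟩ := hF_bdd
  set C' : ℝ := max C 0 with hC'
  have hC'0 : 0 ≤ C' := le_max_right _ _
  have hFC : ∀ x, |F x| ≤ C' := fun x => (hC x).trans (le_max_left _ _)
  set v : ℝ≥0 := Real.toNNReal (σ ^ 2) with hvdef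
  have hv2 : (v : ℝ) = σ ^ 2 := Real.coe_toNNReal _ (sq_nonneg σ)
  have hv : 0 < (v : ℝ) := by rw [hv2]; positivity
  have hvne : v ≠ 0 := by
    intro h; rw [h] at hv; simp at hv
  set S : ℝ := (Real.sqrt (2 * π * v))⁻¹ with hS
  have hS0 : 0 ≤ S := by positivity
  set bound : ℝ → ℝ := fun x =>
    (C' * (S * Real.exp (1 / (2 * v)) / v)) *
      ((|x - θ| + 1) * Real.exp (-(1 / (4 * (v:ℝ))) * (x - θ) ^ 2)) with hbound
  have hb4 : 0 < 1 / (4 * (v:ℝ)) := by positivity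
  have main := hasDerivAt_integral_of_dominated_loc_of_deriv_le (μ := volume)
      (F := fun t x => F x * gaussianPDFReal t v x)
      (F' := fun t x => F x * (gaussianPDFReal t v x * ((x - t) / v)))
      (x₀ := θ) (bound := bound) (Metric.ball_mem_nhds θ one_pos)
      (Filter.Eventually.of_forall fun t =>
        (hF_meas.mul (measurable_gaussianPDFReal t v)).aestronglyMeasurable)
      ((integrable_gaussianPDFReal θ v).bdd_mul hF_meas.aestronglyMeasurable
        (ae_of_all _ fun x => by simpa using hFC x))
      ((hF_meas.mul ((measurable_gaussianPDFReal θ v).mul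
        ((measurable_id.sub_const θ).div_const _))).aestronglyMeasurable)
      (ae_of_all _ fun x t ht => ?_)
      ((aux_integrable (1 / (4 * (v:ℝ))) θ hb4).const_mul _)
      (ae_of_all _ fun x t _ => (aux_deriv v hv x t).const_mul (F x))
  · have hfun : (fun t : ℝ => ∫ x, F x ∂(gaussianReal t v))
        = fun t : ℝ => ∫ x, F x * gaussianPDFReal t v x :=
      funext fun t => aux_int t v hvne F
    have hval : (∫ x, F x * ((x - θ) / σ ^ 2) ∂(gaussianReal θ v))
        = ∫ x, F x * (gaussianPDFReal θ v x * ((x - θ) / v)) := by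
      rw [aux_int θ v hvne]
      refine integral_congr_ae (ae_of_all _ fun x => ?_)
      rw [hv2]; ring
    rw [hvdef] at hfun hval ⊢
    rw [hfun, hval]
    exact main.2
  · -- the bound
    have hdist : |t - θ| < 1 := by
      rw [Metric.mem_ball, Real.dist_eq] at ht; exact ht
    have hE : Real.exp (-(x - t) ^ 2 / (2 * v))
        ≤ Real.exp (1 / (2 * v)) * Real.exp (-(1 / (4 * (v:ℝ))) * (x - θ) ^ 2) := by
      rw [← Real.exp_add]
      apply Real.exp_le_exp.mpr
      have hsq : (x - θ) ^ 2 ≤ 2 * (x - t) ^ 2 + 2 := by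
        nlinarith [sq_nonneg ((x - t) - (t - θ)), sq_nonneg (t - θ), abs_nonneg (t - θ),
          sq_abs (t - θ), hdist]
      have e1 : -(x - t) ^ 2 / (2 * (v:ℝ)) = (-2 * (x - t) ^ 2) / (4 * v) := by
        field_simp; ring
      have e2 : (1:ℝ) / (2 * v) + (-(1 / (4 * (v:ℝ)))) * (x - θ) ^ 2
          = (2 - (x - θ) ^ 2) / (4 * v) := by
        field_simp; ring
      rw [e1, e2]
      gcongr
      linarith
    have hxt : |x - t| ≤ |x - θ| + 1 := by
      calc |x - t| ≤ |x - θ| + |θ - t| := abs_sub_le x θ t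
        _ ≤ |x - θ| + 1 := by rw [abs_sub_comm θ t]; linarith
    have hnorm : ‖F x * (gaussianPDFReal t v x * ((x - t) / v))‖
        = |F x| * ((S * Real.exp (-(x - t) ^ 2 / (2 * v))) * (|x - t| / v)) := by
      rw [Real.norm_eq_abs, abs_mul, abs_mul, abs_div]
      rw [abs_of_nonneg (gaussianPDFReal_nonneg t v x), abs_of_pos hv]
      rfl
    have : bound x = C' * ((S * (Real.exp (1 / (2 * v)) *
        Real.exp (-(1 / (4 * (v:ℝ))) * (x - θ) ^ 2))) * ((|x - θ| + 1) / v)) := by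
      rw [hbound]; field_simp
    rw [hnorm, this]
    gcongr
    exact hFC x
end

section
/- Let σ > 0 and let F : ℝ → ℝ be bounded and measurable. Then the perturbation form of the smoothed objective, θ ↦ ∫ F(θ + ε) d(gaussianReal 0 σ²)(ε), is differentiable at every θ ∈ ℝ, and its derivative at θ equals (1/σ²) · ∫ ε · F(θ + ε) d(gaussianReal 0 σ²)(ε). (This is the identity ∇_θ E_{ε∼p}[F(θ + ε)] = E_{ε∼p}[∇_ε log p(ε) · F(θ + ε)] for ε ∼ N(0, σ²), whose score is ∇_ε log p(ε) = ε/σ².) -/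
open MeasureTheory ProbabilityTheory Real

lemma integral_gaussianReal_eq (m : ℝ) {v : NNReal} (hv : v ≠ 0) (g : ℝ → ℝ) :
    ∫ x, g x ∂(gaussianReal m v) = ∫ x, gaussianPDFReal m v x * g x := by
  rw [gaussianReal_of_var_ne_zero _ hv, gaussianPDF_def]
  have : (fun x => ENNReal.ofReal (gaussianPDFReal m v x))
      = fun x => ((gaussianPDFReal m v x).toNNReal : ENNReal) := rfl
  rw [this, integral_withDensity_eq_integral_smul
      ((measurable_gaussianPDFReal m v).real_toNNReal) g]
  congr 1 with x
  simp [NNReal.smul_def, Real.coe_toNNReal _ (gaussianPDFReal_nonneg m v x)]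

lemma hasDerivAt_gaussianPDFReal_mean (v : NNReal) (hv : (v : ℝ) ≠ 0) (x t : ℝ) :
    HasDerivAt (fun t => gaussianPDFReal t v x)
      (((x - t) / (v : ℝ)) * gaussianPDFReal t v x) t := by
  have h1 : HasDerivAt (fun t : ℝ => -(x - t) ^ 2 / (2 * (v : ℝ))) ((x - t) / v) t := by
    have h0 : HasDerivAt (fun t : ℝ => x - t) (-1) t := by
      simpa using (hasDerivAt_id t).const_sub x
    have := ((h0.pow 2).neg.div_const (2 * (v : ℝ)))
    refine this.congr_deriv ?_
    field_simp
    ring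
  have h2 := (h1.exp).const_mul ((√(2 * π * v))⁻¹)
  refine h2.congr_deriv ?_
  simp only [gaussianPDFReal]
  ring

/-- Perturbation form of the score-function gradient identity:
`θ ↦ ∫ F(θ + ε) d(gaussianReal 0 σ²)(ε)` is differentiable at every `θ` with derivative
`(1/σ²) · ∫ ε · F(θ + ε) d(gaussianReal 0 σ²)(ε)`. -/
theorem perturbed_objective_hasDerivAt_score
    (σ : ℝ) (hσ : 0 < σ) (F : ℝ → ℝ)
    (hF_meas : Measurable F) (hF_bdd : ∃ C : ℝ, ∀ x, |F x| ≤ C) (θ : ℝ) :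
    HasDerivAt (fun t : ℝ => ∫ ε, F (t + ε) ∂(gaussianReal 0 (Real.toNNReal (σ ^ 2))))
      ((1 / σ ^ 2) * ∫ ε, ε * F (θ + ε) ∂(gaussianReal 0 (Real.toNNReal (σ ^ 2)))) θ := by
  obtain ⟨C, hC⟩ := hF_bdd
  have hC0 : 0 ≤ C := (abs_nonneg _).trans (hC 0)
  set v : NNReal := Real.toNNReal (σ ^ 2) with hv_def
  have hvσ : (v : ℝ) = σ ^ 2 := Real.coe_toNNReal _ (by positivity)
  have hv' : (v : ℝ) ≠ 0 := by rw [hvσ]; positivity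
  have hv : v ≠ 0 := by exact_mod_cast hv'
  -- step 1: rewrite the objective via Lebesgue integral against the pdf
  have key : ∀ t : ℝ, (∫ ε, F (t + ε) ∂(gaussianReal 0 v))
      = ∫ x, gaussianPDFReal t v x * F x := by
    intro t
    have hmap : (gaussianReal 0 v).map (t + ·) = gaussianReal t v := by
      simpa using gaussianReal_map_const_add (μ := 0) (v := v) t
    calc ∫ ε, F (t + ε) ∂(gaussianReal 0 v)
        = ∫ x, F x ∂((gaussianReal 0 v).map (t + ·)) := by
          rw [integral_map (by fun_prop) (hF_meas.aestronglyMeasurable)]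
      _ = ∫ x, gaussianPDFReal t v x * F x := by
          rw [hmap, integral_gaussianReal_eq t hv]
  have main := hasDerivAt_integral_of_dominated_loc_of_deriv_le
      (μ := volume) (x₀ := θ) (𝕜 := ℝ)
      (F := fun t x => gaussianPDFReal t v x * F x)
      (F' := fun t x => ((x - t) / σ ^ 2) * (gaussianPDFReal t v x * F x))
      (bound := fun x => C * (1 / σ ^ 2) * (√(2 * π * (v : ℝ)))⁻¹ * rexp (1 / (2 * σ ^ 2))
        * ((|x - θ| + 1) * rexp (-(1 / (4 * σ ^ 2)) * (x - θ) ^ 2)))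
      (Metric.ball_mem_nhds θ one_pos)
      (Filter.Eventually.of_forall fun t =>
        ((measurable_gaussianPDFReal t v).mul hF_meas).aestronglyMeasurable)
      ?hint ?h'meas ?hbound ?hbound_int ?hdiff
  case hint =>
    refine ((integrable_gaussianPDFReal θ v).const_mul C).mono'
      ((measurable_gaussianPDFReal θ v).mul hF_meas).aestronglyMeasurable
      (Filter.Eventually.of_forall fun x => ?_)
    have h0 := gaussianPDFReal_nonneg θ v x
    have h1 := hC x
    rw [Real.norm_eq_abs, abs_mul, abs_of_nonneg h0]
    nlinarith
  case h'meas =>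
    exact (((measurable_id.sub_const θ).div_const (σ ^ 2)).mul
      ((measurable_gaussianPDFReal θ v).mul hF_meas)).aestronglyMeasurable
  case hbound =>
    refine Filter.Eventually.of_forall fun x t ht => ?_
    have hs : |t - θ| < 1 := by rwa [Metric.mem_ball, Real.dist_eq] at ht
    have hs2 : (t - θ) ^ 2 ≤ 1 := by nlinarith [abs_nonneg (t - θ), sq_abs (t - θ)]
    have habs : |x - t| ≤ |x - θ| + 1 := by
      have : |x - t| ≤ |x - θ| + |θ - t| := abs_sub_le x θ t
      have : |θ - t| ≤ 1 := by rw [abs_sub_comm]; linarith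
      linarith [abs_sub_le x θ t]
    -- exponent inequality
    have hexp : rexp (-(x - t) ^ 2 / (2 * (v : ℝ)))
        ≤ rexp (1 / (2 * σ ^ 2)) * rexp (-(1 / (4 * σ ^ 2)) * (x - θ) ^ 2) := by
      rw [← Real.exp_add, Real.exp_le_exp, hvσ]
      have hkey : (x - θ) ^ 2 ≤ 2 + 2 * (x - t) ^ 2 := by
        nlinarith [sq_nonneg (x - t - (t - θ)), hs2, sq_nonneg (x - t + (t - θ))]
      have hA : (0 : ℝ) < σ ^ 2 := by positivity
      have heq : 1 / (2 * σ ^ 2) + -(1 / (4 * σ ^ 2)) * (x - θ) ^ 2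
          - (-(x - t) ^ 2 / (2 * σ ^ 2))
          = (2 + 2 * (x - t) ^ 2 - (x - θ) ^ 2) / (4 * σ ^ 2) := by
        field_simp
        ring
      have hnn : (0 : ℝ) ≤ (2 + 2 * (x - t) ^ 2 - (x - θ) ^ 2) / (4 * σ ^ 2) :=
        div_nonneg (by linarith) (by positivity)
      linarith [heq ▸ hnn]
    have hpdf0 := gaussianPDFReal_nonneg t v x
    have e1 : ‖((x - t) / σ ^ 2) * (gaussianPDFReal t v x * F x)‖
        = |x - t| * gaussianPDFReal t v x * |F x| / σ ^ 2 := by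
      rw [Real.norm_eq_abs, abs_mul, abs_mul, abs_div, abs_of_nonneg hpdf0,
        abs_of_pos (show (0:ℝ) < σ ^ 2 by positivity)]
      ring
    rw [e1]
    have e2 : C * (1 / σ ^ 2) * (√(2 * π * (v : ℝ)))⁻¹ * rexp (1 / (2 * σ ^ 2))
        * ((|x - θ| + 1) * rexp (-(1 / (4 * σ ^ 2)) * (x - θ) ^ 2))
        = (|x - θ| + 1) * ((√(2 * π * (v : ℝ)))⁻¹
          * (rexp (1 / (2 * σ ^ 2)) * rexp (-(1 / (4 * σ ^ 2)) * (x - θ) ^ 2))) * C / σ ^ 2 := by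
      ring
    refine le_trans ?_ (le_of_eq e2.symm)
    have hpdfle : gaussianPDFReal t v x ≤ (√(2 * π * (v : ℝ)))⁻¹
        * (rexp (1 / (2 * σ ^ 2)) * rexp (-(1 / (4 * σ ^ 2)) * (x - θ) ^ 2)) := by
      rw [gaussianPDFReal]
      have hinv : (0 : ℝ) ≤ (√(2 * π * (v : ℝ)))⁻¹ := by positivity
      exact mul_le_mul_of_nonneg_left hexp hinv
    gcongr
    exact hC x
  case hbound_int =>
    have hb : (0 : ℝ) < 1 / (4 * σ ^ 2) := by positivity
    have h1 : Integrable (fun x : ℝ => (|x| + 1) * rexp (-(1 / (4 * σ ^ 2)) * x ^ 2)) := by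
      have ha := (integrable_mul_exp_neg_mul_sq hb).abs
      have h2 := integrable_exp_neg_mul_sq hb
      refine (ha.add h2).congr (Filter.Eventually.of_forall fun x => ?_)
      simp only [Pi.add_apply, abs_mul, Real.abs_exp]
      ring
    exact ((h1.comp_sub_right θ).const_mul _)
  case hdiff =>
    refine Filter.Eventually.of_forall fun x t ht => ?_
    have h := (hasDerivAt_gaussianPDFReal_mean v hv' x t).mul_const (F x)
    refine h.congr_deriv ?_
    rw [hvσ]
    ring
  -- conclude
  have hmapθ : (gaussianReal 0 v).map (θ + ·) = gaussianReal θ v := by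
    simpa using gaussianReal_map_const_add (μ := 0) (v := v) θ
  have hval : (∫ x, ((x - θ) / σ ^ 2) * (gaussianPDFReal θ v x * F x))
      = (1 / σ ^ 2) * ∫ ε, ε * F (θ + ε) ∂(gaussianReal 0 v) := by
    have h2 : (∫ ε, ε * F (θ + ε) ∂(gaussianReal 0 v))
        = ∫ x, (x - θ) * F x ∂(gaussianReal θ v) := by
      rw [← hmapθ, integral_map (φ := fun x => θ + x) (f := fun x => (x - θ) * F x)
        (measurable_id.const_add θ).aemeasurable
        (((measurable_id'.sub_const θ).mul hF_meas).aestronglyMeasurable)]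
      simp
    rw [h2, integral_gaussianReal_eq θ hv, ← integral_const_mul]
    congr 1 with x
    ring
  have hfun : (fun t : ℝ => ∫ ε, F (t + ε) ∂(gaussianReal 0 v))
      = fun t : ℝ => ∫ x, gaussianPDFReal t v x * F x := funext key
  rw [hfun, ← hval]
  exact main.2
end

section
/- Let n : ℕ, σ > 0, and let F : (Fin n → ℝ) → ℝ be bounded and measurable. Let μ be the product measure on Fin n → ℝ whose every coordinate is gaussianReal 0 σ² (i.e., the coordinates of the perturbation ε are i.i.d. N(0, σ²)). Then for every θ : Fin n → ℝ and every coordinate j : Fin n, the partial map t ↦ ∫ F((Function.update θ j t) + ε) dμ(ε) is differentiable at t = θ j, and its derivative there equals (1/σ²) · ∫ (ε j) · F(θ + ε) dμ(ε). (Coordinatewise form of ∇_θ E_{ε∼N(0,σ²I)}[F(θ + ε)] = (1/σ²) E[F(θ + ε) ε].) -/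
open MeasureTheory ProbabilityTheory Real NNReal ENNReal

lemma gaussAux_deriv (v : ℝ≥0) (hv : 0 < (v:ℝ)) (u t : ℝ) :
    HasDerivAt (fun t => gaussianPDFReal t v u)
      (((u - t) / v) * gaussianPDFReal t v u) t := by
  have h1 : HasDerivAt (fun t : ℝ => u - t) (-1) t := (hasDerivAt_id t).const_sub u
  have h2 : HasDerivAt (fun t : ℝ => -(u - t)^2 / (2*(v:ℝ)))
      ((-(2 * (u - t) ^ 1 * -1)) / (2*(v:ℝ))) t := ((h1.pow 2).neg).div_const _
  have h3 := (h2.exp).const_mul ((Real.sqrt (2 * π * v))⁻¹)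
  refine h3.congr_deriv (Eq.symm ?_)
  simp only [gaussianPDFReal]
  field_simp

lemma gaussAux_integral (v : ℝ≥0) (hv : v ≠ 0) (f : ℝ → ℝ) :
    ∫ x, f x ∂(gaussianReal 0 v) = ∫ x, gaussianPDFReal 0 v x * f x := by
  rw [gaussianReal_of_var_ne_zero _ hv]
  have h1 : gaussianPDF 0 v = fun x => (((gaussianPDFReal 0 v x).toNNReal : ℝ≥0) : ℝ≥0∞) := rfl
  rw [h1, integral_withDensity_eq_integral_smul
    ((measurable_gaussianPDFReal 0 v).real_toNNReal)]
  congr 1; ext x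
  simp [NNReal.smul_def, Real.coe_toNNReal _ (gaussianPDFReal_nonneg 0 v x)]

lemma gaussAux_poly_integrable {b : ℝ} (hb : 0 < b) (c : ℝ) :
    Integrable (fun x : ℝ => (|x - c| + 1) * Real.exp (-b * (x - c)^2)) := by
  have h1 : Integrable (fun x : ℝ => (|x| + 1) * Real.exp (-b * x^2)) := by
    have h2 : Integrable (fun x : ℝ => |x * Real.exp (-b * x^2)|) :=
      (integrable_mul_exp_neg_mul_sq hb).abs
    have h3 : Integrable (fun x : ℝ => |x| * Real.exp (-b * x^2)) := by
      refine h2.congr (ae_of_all _ fun x => ?_)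
      simp only [abs_mul, abs_of_nonneg (Real.exp_pos _).le]
    simpa [add_mul, one_mul, Pi.add_def] using h3.add (integrable_exp_neg_mul_sq hb)
  exact h1.comp_sub_right c

lemma gaussAux_integrable_id (v : ℝ≥0) (hv : 0 < (v:ℝ)) :
    Integrable (fun x : ℝ => x) (gaussianReal 0 v) := by
  have hvne : v ≠ 0 := by
    intro h; rw [h] at hv; simp at hv
  rw [gaussianReal_of_var_ne_zero _ hvne]
  have h1 : gaussianPDF 0 v = fun x => (((gaussianPDFReal 0 v x).toNNReal : ℝ≥0) : ℝ≥0∞) := rfl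
  rw [h1, integrable_withDensity_iff_integrable_smul
    ((measurable_gaussianPDFReal 0 v).real_toNNReal)]
  have hb : (0:ℝ) < (2*(v:ℝ))⁻¹ := by positivity
  refine Integrable.mono' (((integrable_mul_exp_neg_mul_sq hb).abs).const_mul
    ((Real.sqrt (2 * π * v))⁻¹)) ?_ (ae_of_all _ fun x => ?_)
  · exact (((measurable_gaussianPDFReal 0 v).real_toNNReal).coe_nnreal_real.smul
      measurable_id).aestronglyMeasurable
  · rw [NNReal.smul_def, Real.coe_toNNReal _ (gaussianPDFReal_nonneg 0 v x)]
    apply le_of_eq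
    simp only [smul_eq_mul, Real.norm_eq_abs, gaussianPDFReal_def]
    rw [abs_mul, abs_mul, abs_of_nonneg (by positivity : (0:ℝ) ≤ (Real.sqrt (2*π*(v:ℝ)))⁻¹),
        abs_of_nonneg (Real.exp_pos _).le, abs_mul, abs_of_nonneg (Real.exp_pos _).le]
    have hexp : -(x - 0)^2/(2*(v:ℝ)) = -(2*(v:ℝ))⁻¹ * x^2 := by field_simp; ring
    rw [hexp]; ring

lemma gaussAux_oneD (v : ℝ≥0) (hv : 0 < (v:ℝ)) (g : ℝ → ℝ) (hg : Measurable g)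
    (C : ℝ) (hC : ∀ x, |g x| ≤ C) (t₀ : ℝ) :
    HasDerivAt (fun t => ∫ s, g (t + s) ∂(gaussianReal 0 v))
      ((1/(v:ℝ)) * ∫ s, s * g (t₀ + s) ∂(gaussianReal 0 v)) t₀ := by
  have hvne : v ≠ 0 := by intro h; rw [h] at hv; simp at hv
  have hC0 : 0 ≤ C := (abs_nonneg _).trans (hC 0)
  -- Step A: rewrite as Lebesgue integral against shifted density
  have hA : ∀ t : ℝ, ∫ s, g (t + s) ∂(gaussianReal 0 v)
      = ∫ u, g u * gaussianPDFReal t v u := by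
    intro t
    rw [gaussAux_integral v hvne]
    have h1 : ∀ s : ℝ, gaussianPDFReal 0 v s * g (t + s)
        = (fun u => g u * gaussianPDFReal t v u) (t + s) := by
      intro s
      have h2 : gaussianPDFReal t v (t + s) = gaussianPDFReal 0 v s := by
        have := gaussianPDFReal_sub (μ := 0) (v := v) (t + s) t
        simp only [add_sub_cancel_left, zero_add] at this
        exact this.symm
      simp only [h2]; ring
    simp_rw [h1]
    exact integral_add_left_eq_self (μ := volume) (fun u => g u * gaussianPDFReal t v u) t
  -- Step B: differentiate under the integral sign
  have hderiv := hasDerivAt_integral_of_dominated_loc_of_deriv_le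
    (F := fun t u => g u * gaussianPDFReal t v u)
    (F' := fun t u => g u * (((u - t) / v) * gaussianPDFReal t v u))
    (x₀ := t₀) (s := Metric.ball t₀ 1) (μ := (volume : Measure ℝ))
    (bound := fun u => (C / v * ((Real.sqrt (2*π*(v:ℝ)))⁻¹ * Real.exp (1/(v:ℝ))))
      * ((|u - t₀| + 1) * Real.exp (-(4*(v:ℝ))⁻¹ * (u - t₀)^2)))
    (Metric.ball_mem_nhds t₀ one_pos)
    (Filter.Eventually.of_forall fun t =>
      (hg.mul (measurable_gaussianPDFReal t v)).aestronglyMeasurable)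
    ?hint ?hmeas' ?hbound ?hboundint ?hdiff
  case hint =>
    refine Integrable.mono' ((integrable_gaussianPDFReal t₀ v).const_mul C)
      (hg.mul (measurable_gaussianPDFReal t₀ v)).aestronglyMeasurable
      (ae_of_all _ fun u => ?_)
    rw [Real.norm_eq_abs, abs_mul, abs_of_nonneg (gaussianPDFReal_nonneg t₀ v u)]
    exact mul_le_mul_of_nonneg_right (hC u) (gaussianPDFReal_nonneg t₀ v u)
  case hmeas' =>
    exact (hg.mul (((measurable_id.sub_const t₀).div_const _).mul
      (measurable_gaussianPDFReal t₀ v))).aestronglyMeasurable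
  case hbound =>
    refine ae_of_all _ fun u t ht => ?_
    set a := u - t with ha
    set b := u - t₀ with hb
    have hab : |b - a| < 1 := by
      rw [Metric.mem_ball, Real.dist_eq] at ht
      have : b - a = t - t₀ := by rw [ha, hb]; ring
      rwa [this]
    have h2 : |a| ≤ |b| + 1 := by
      have h2a := abs_sub_abs_le_abs_sub a b
      have h2b : |a - b| = |b - a| := abs_sub_comm a b
      linarith
    have h3 : Real.exp (-(a^2)/(2*(v:ℝ))) ≤ Real.exp (1/(v:ℝ)) * Real.exp (-(4*(v:ℝ))⁻¹ * b^2) := by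
      rw [← Real.exp_add]
      apply Real.exp_le_exp.mpr
      have h6 : |b| ≤ |a| + 1 := by
        have h6a := abs_sub_abs_le_abs_sub b a
        linarith
      have h7 : |b| * |b| ≤ (|a| + 1) * (|a| + 1) := mul_self_le_mul_self (abs_nonneg b) h6
      have hb2 : b^2 ≤ 2*a^2 + 2 := by
        nlinarith [sq_abs a, sq_abs b, sq_nonneg (|a| - 1), h7]
      have key : (1/(v:ℝ) + -(4*(v:ℝ))⁻¹ * b^2) - (-(a^2)/(2*(v:ℝ)))
          = (2*a^2 + 4 - b^2) / (4*(v:ℝ)) := by field_simp; ring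
      have h4 : (0:ℝ) ≤ (2*a^2 + 4 - b^2) / (4*(v:ℝ)) :=
        div_nonneg (by linarith) (by positivity)
      linarith [key ▸ h4]
    have hpdf : gaussianPDFReal t v u = (Real.sqrt (2*π*(v:ℝ)))⁻¹ * Real.exp (-(a^2)/(2*(v:ℝ))) := by
      rw [gaussianPDFReal_def]
    rw [Real.norm_eq_abs, abs_mul, abs_mul, abs_of_nonneg (gaussianPDFReal_nonneg t v u),
      abs_div, abs_of_nonneg hv.le, hpdf]
    calc |g u| * (|a| / v * ((Real.sqrt (2*π*(v:ℝ)))⁻¹ * Real.exp (-(a^2)/(2*(v:ℝ)))))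
        ≤ C * ((|b| + 1) / v * ((Real.sqrt (2*π*(v:ℝ)))⁻¹
            * (Real.exp (1/(v:ℝ)) * Real.exp (-(4*(v:ℝ))⁻¹ * b^2)))) := by
          apply mul_le_mul (hC u) ?_ (by positivity) hC0
          apply mul_le_mul (by gcongr) ?_ (by positivity) (by positivity)
          exact mul_le_mul_of_nonneg_left h3 (by positivity)
      _ = (C / v * ((Real.sqrt (2*π*(v:ℝ)))⁻¹ * Real.exp (1/(v:ℝ))))
            * ((|b| + 1) * Real.exp (-(4*(v:ℝ))⁻¹ * b^2)) := by ring
  case hboundint =>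
    exact (gaussAux_poly_integrable (by positivity : (0:ℝ) < (4*(v:ℝ))⁻¹) t₀).const_mul _
  case hdiff =>
    refine ae_of_all _ fun u t _ => ?_
    exact (gaussAux_deriv v hv u t).const_mul (g u)
  -- Step C: identify the derivative
  obtain ⟨-, hD⟩ := hderiv
  have hfun : (fun t => ∫ s, g (t + s) ∂(gaussianReal 0 v))
      = fun t => ∫ u, g u * gaussianPDFReal t v u := funext hA
  rw [hfun]
  refine hD.congr_deriv (Eq.symm ?_)
  rw [gaussAux_integral v hvne]
  have h1 : ∀ s : ℝ, gaussianPDFReal 0 v s * (s * g (t₀ + s))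
      = (fun u => gaussianPDFReal t₀ v u * ((u - t₀) * g u)) (t₀ + s) := by
    intro s
    have h2 : gaussianPDFReal t₀ v (t₀ + s) = gaussianPDFReal 0 v s := by
      have := gaussianPDFReal_sub (μ := 0) (v := v) (t₀ + s) t₀
      simp only [add_sub_cancel_left, zero_add] at this
      exact this.symm
    simp only [h2, add_sub_cancel_left]
  simp_rw [h1]
  rw [integral_add_left_eq_self (μ := volume)
    (fun u => gaussianPDFReal t₀ v u * ((u - t₀) * g u)) t₀, ← integral_const_mul]
  congr 1; ext u
  field_simp

/-- Coordinatewise score-function gradient identity for an isotropic Gaussian perturbation: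
for the product measure `μ` with i.i.d. `N(0, σ²)` coordinates, the partial map
`t ↦ ∫ F(Function.update θ j t + ε) dμ(ε)` is differentiable at `t = θ j` with derivative
`(1/σ²) · ∫ (ε j) · F(θ + ε) dμ(ε)`. -/
theorem pi_gaussian_partial_hasDerivAt_score
    (n : ℕ) (σ : ℝ) (hσ : 0 < σ) (F : (Fin n → ℝ) → ℝ)
    (hF_meas : Measurable F) (hF_bdd : ∃ C : ℝ, ∀ x, |F x| ≤ C)
    (θ : Fin n → ℝ) (j : Fin n) :
    HasDerivAt
      (fun t : ℝ =>
        ∫ ε, F (Function.update θ j t + ε)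
          ∂(Measure.pi fun _ : Fin n => gaussianReal 0 (Real.toNNReal (σ ^ 2))))
      ((1 / σ ^ 2) *
        ∫ ε, (ε j) * F (θ + ε)
          ∂(Measure.pi fun _ : Fin n => gaussianReal 0 (Real.toNNReal (σ ^ 2))))
      (θ j) := by
  obtain ⟨C, hC⟩ := hF_bdd
  have hC0 : 0 ≤ C := (abs_nonneg _).trans (hC 0)
  cases n with
  | zero => exact j.elim0
  | succ m =>
  set v : ℝ≥0 := Real.toNNReal (σ ^ 2) with hv_def
  have hvR : (v : ℝ) = σ ^ 2 := Real.coe_toNNReal _ (sq_nonneg σ)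
  have hv : 0 < (v : ℝ) := by rw [hvR]; positivity
  set γ : Measure ℝ := gaussianReal 0 v with hγ_def
  set Pm : Measure (Fin m → ℝ) := Measure.pi fun _ : Fin m => γ with hPm_def
  set μm : Measure (Fin (m+1) → ℝ) := Measure.pi fun _ : Fin (m+1) => γ with hμm_def
  set e := MeasurableEquiv.piFinSuccAbove (fun _ : Fin (m+1) => ℝ) j with he_def
  have hmp : MeasurePreserving e μm (γ.prod Pm) :=
    measurePreserving_piFinSuccAbove (fun _ : Fin (m+1) => γ) j
  set θ' : (i : Fin m) → ℝ := fun i => θ (j.succAbove i) with hθ'_def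
  set ins : ℝ → (Fin m → ℝ) → (Fin (m+1) → ℝ) := fun s y => j.insertNth s y with hins_def
  -- pointwise identification
  have fact1 : ∀ (t : ℝ) (ε : Fin (m+1) → ℝ),
      Function.update θ j t + ε = ins (t + ε j) (θ' + j.removeNth ε) := by
    intro t ε
    funext k
    refine Fin.succAboveCases j ?_ (fun i => ?_) k
    · simp [hins_def, Fin.insertNth_apply_same]
    · simp [hins_def, Fin.insertNth_apply_succAbove, Function.update_of_ne (j.succAbove_ne i),
        Fin.removeNth, hθ'_def]
  have fact2 : ∀ ε : Fin (m+1) → ℝ,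
      θ + ε = ins (θ j + ε j) (θ' + j.removeNth ε) := by
    intro ε
    have := fact1 (θ j) ε
    rwa [Function.update_eq_self] at this
  have he_apply : ∀ ε : Fin (m+1) → ℝ, e ε = (ε j, j.removeNth ε) := fun _ => rfl
  -- inner function
  set g : ℝ → ℝ := fun u => ∫ y, F (ins u (θ' + y)) ∂Pm with hg_def
  have hins_meas : Measurable fun p : ℝ × (Fin m → ℝ) => ins p.1 (θ' + p.2) := by
    have h1 : Measurable fun p : ℝ × (Fin m → ℝ) => (p.1, θ' + p.2) :=
      measurable_fst.prodMk (measurable_const.add measurable_snd)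
    have h2 : (fun p : ℝ × (Fin m → ℝ) => ins p.1 (θ' + p.2))
        = fun p => e.symm (p.1, θ' + p.2) := rfl
    rw [h2]; exact e.symm.measurable.comp h1
  have hg_meas : Measurable g := by
    have hsm : StronglyMeasurable fun p : ℝ × (Fin m → ℝ) => F (ins p.1 (θ' + p.2)) :=
      (hF_meas.comp hins_meas).stronglyMeasurable
    exact hsm.integral_prod_right'.measurable
  have hg_bdd : ∀ u, |g u| ≤ C := by
    intro u
    have h1 := norm_integral_le_of_norm_le_const (μ := Pm)
      (f := fun y => F (ins u (θ' + y))) (C := C)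
      (ae_of_all _ fun y => by rw [Real.norm_eq_abs]; exact hC _)
    simpa [Real.norm_eq_abs, measure_univ] using h1
  -- change of variables for the function of t
  have hAt : ∀ t : ℝ, (∫ ε, F (Function.update θ j t + ε) ∂μm) = ∫ s, g (t + s) ∂γ := by
    intro t
    have h1 : (fun ε : Fin (m+1) → ℝ => F (Function.update θ j t + ε))
        = fun ε => (fun z : ℝ × (Fin m → ℝ) => F (ins (t + z.1) (θ' + z.2))) (e ε) := by
      funext ε
      simp only [he_apply]
      rw [fact1]
    have hmz : Measurable fun z : ℝ × (Fin m → ℝ) => F (ins (t + z.1) (θ' + z.2)) :=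
      hF_meas.comp (hins_meas.comp ((measurable_fst.const_add t).prodMk measurable_snd))
    have hint : Integrable (fun z : ℝ × (Fin m → ℝ) => F (ins (t + z.1) (θ' + z.2)))
        (γ.prod Pm) := by
      refine Integrable.mono' (integrable_const C) hmz.aestronglyMeasurable
        (ae_of_all _ fun z => by rw [Real.norm_eq_abs]; exact hC _)
    calc ∫ ε, F (Function.update θ j t + ε) ∂μm
        = ∫ ε, (fun z : ℝ × (Fin m → ℝ) => F (ins (t + z.1) (θ' + z.2))) (e ε) ∂μm := by
          rw [h1]
      _ = ∫ z, F (ins (t + z.1) (θ' + z.2)) ∂(γ.prod Pm) :=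
          hmp.integral_comp' (fun z => F (ins (t + z.1) (θ' + z.2)))
      _ = ∫ s, ∫ y, F (ins (t + s) (θ' + y)) ∂Pm ∂γ := integral_prod _ hint
      _ = ∫ s, g (t + s) ∂γ := rfl
  -- change of variables for the derivative value
  have hval : ∫ ε, ε j * F (θ + ε) ∂μm = ∫ s, s * g (θ j + s) ∂γ := by
    have h1 : (fun ε : Fin (m+1) → ℝ => ε j * F (θ + ε))
        = fun ε => (fun z : ℝ × (Fin m → ℝ) =>
            z.1 * F (ins (θ j + z.1) (θ' + z.2))) (e ε) := by
      funext ε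
      simp only [he_apply]
      rw [fact2]
    have hmz : Measurable fun z : ℝ × (Fin m → ℝ) =>
        z.1 * F (ins (θ j + z.1) (θ' + z.2)) :=
      measurable_fst.mul (hF_meas.comp (hins_meas.comp
        ((measurable_fst.const_add (θ j)).prodMk measurable_snd)))
    have hid : Integrable (fun z : ℝ × (Fin m → ℝ) => z.1) (γ.prod Pm) := by
      have h3 : Integrable (fun x : ℝ => x) ((γ.prod Pm).map Prod.fst) := by
        rw [Measure.map_fst_prod]
        simpa [measure_univ] using gaussAux_integrable_id v hv
      exact (integrable_map_measure aestronglyMeasurable_id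
        measurable_fst.aemeasurable).mp h3
    have hint2 : Integrable (fun z : ℝ × (Fin m → ℝ) =>
        z.1 * F (ins (θ j + z.1) (θ' + z.2))) (γ.prod Pm) := by
      refine Integrable.mono' (hid.abs.const_mul C) hmz.aestronglyMeasurable
        (ae_of_all _ fun z => ?_)
      rw [Real.norm_eq_abs, abs_mul, mul_comm C]
      exact mul_le_mul_of_nonneg_left (hC _) (abs_nonneg _)
    calc ∫ ε, ε j * F (θ + ε) ∂μm
        = ∫ ε, (fun z : ℝ × (Fin m → ℝ) =>
            z.1 * F (ins (θ j + z.1) (θ' + z.2))) (e ε) ∂μm := by rw [h1]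
      _ = ∫ z, z.1 * F (ins (θ j + z.1) (θ' + z.2)) ∂(γ.prod Pm) :=
          hmp.integral_comp' (fun z => z.1 * F (ins (θ j + z.1) (θ' + z.2)))
      _ = ∫ s, ∫ y, s * F (ins (θ j + s) (θ' + y)) ∂Pm ∂γ := integral_prod _ hint2
      _ = ∫ s, s * g (θ j + s) ∂γ := by
          congr 1; funext s; rw [integral_const_mul]
  have hfun : (fun t : ℝ => ∫ ε, F (Function.update θ j t + ε) ∂μm)
      = fun t => ∫ s, g (t + s) ∂γ := funext hAt
  rw [hfun, hval, show (1:ℝ) / σ ^ 2 = 1 / (v:ℝ) by rw [hvR]]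
  exact gaussAux_oneD v hv g hg_meas C hg_bdd (θ j)
end

section
/- Let σ > 0, m ≥ 1 a natural number, θ ∈ ℝ, and let F : ℝ → ℝ be bounded and measurable. Let ε_1, …, ε_m be i.i.d. random variables each distributed as gaussianReal 0 σ² (formally, integrate over the m-fold product of gaussianReal 0 σ²). Then the Monte-Carlo gradient estimator g = (1/(m σ²)) · Σ_{k=1}^m ε_k · F(θ + ε_k) is an unbiased estimator of the gradient of the smoothed objective: its expectation equals the derivative at θ of the function θ ↦ ∫ F(θ + ε) d(gaussianReal 0 σ²)(ε). -/
open MeasureTheory ProbabilityTheory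
open Real
open scoped NNReal ENNReal

section helpers
-- marginal of pi measure
lemma pi_map_eval {ι : Type*} [Fintype ι] [DecidableEq ι] (μ : Measure ℝ) [IsProbabilityMeasure μ] (k : ι) :
    (Measure.pi fun _ : ι => μ).map (fun ε => ε k) = μ := by
  ext s hs
  rw [Measure.map_apply (measurable_pi_apply k) hs]
  have h : (fun ε : ι → ℝ => ε k) ⁻¹' s
      = Set.pi Set.univ (Function.update (fun _ : ι => (Set.univ : Set ℝ)) k s) :=
    Set.eval_preimage
  rw [h, Measure.pi_pi]
  rw [Finset.prod_eq_single k (fun i _ hik => by simp [Function.update_apply, hik]) (by simp)]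
  simp

-- integral against gaussianReal as Lebesgue integral against the pdf
lemma integral_gaussianReal_pdf (μ' : ℝ) {v : ℝ≥0} (hv : v ≠ 0) (g : ℝ → ℝ) :
    ∫ x, g x ∂(gaussianReal μ' v) = ∫ x, gaussianPDFReal μ' v x * g x := by
  rw [gaussianReal_of_var_ne_zero _ hv]
  have : (gaussianPDF μ' v) = fun x => ((gaussianPDFReal μ' v x).toNNReal : ℝ≥0∞) := rfl
  rw [this, integral_withDensity_eq_integral_smul
    (by exact (measurable_gaussianPDFReal μ' v).real_toNNReal)]
  congr 1
  ext x
  simp [NNReal.smul_def, Real.coe_toNNReal _ (gaussianPDFReal_nonneg μ' v x)]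

lemma integrable_gaussianReal_pdf_iff (μ' : ℝ) {v : ℝ≥0} (hv : v ≠ 0) {g : ℝ → ℝ}
    (hg : AEStronglyMeasurable g (gaussianReal μ' v)) :
    Integrable g (gaussianReal μ' v) ↔ Integrable (fun x => g x * gaussianPDFReal μ' v x) := by
  rw [gaussianReal_of_var_ne_zero _ hv] at hg ⊢
  rw [integrable_withDensity_iff (measurable_gaussianPDF μ' v) (by
    refine Filter.Eventually.of_forall fun x => ?_
    exact ENNReal.ofReal_lt_top)]
  constructor <;> intro h <;> refine h.congr (Filter.Eventually.of_forall fun x => ?_) <;>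
    simp [gaussianPDF, ENNReal.toReal_ofReal (gaussianPDFReal_nonneg μ' v x)]

lemma hasDerivAt_smoothed (σ : ℝ) (hσ : 0 < σ) (θ : ℝ) (F : ℝ → ℝ)
    (hF_meas : Measurable F) {C : ℝ} (hC : ∀ x, |F x| ≤ C) :
    Integrable (fun x => F x * ((x - θ) / σ ^ 2 * gaussianPDFReal θ (σ^2).toNNReal x)) ∧
    HasDerivAt (fun t => ∫ x, F x * gaussianPDFReal t (σ^2).toNNReal x)
      (∫ x, F x * ((x - θ) / σ ^ 2 * gaussianPDFReal θ (σ^2).toNNReal x)) θ := by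
  have vr : (((σ^2).toNNReal : ℝ≥0) : ℝ) = σ ^ 2 := Real.coe_toNNReal _ (sq_nonneg σ)
  set c : ℝ := (Real.sqrt (2 * π * σ ^ 2))⁻¹ with hc
  have hc0 : 0 ≤ c := inv_nonneg.2 (Real.sqrt_nonneg _)
  have hp : ∀ t x : ℝ, gaussianPDFReal t (σ^2).toNNReal x
      = c * Real.exp (-(x - t)^2 / (2 * σ^2)) := by
    intro t x
    rw [gaussianPDFReal, vr]
  have hσ2 : (0:ℝ) < σ ^ 2 := by positivity
  have hC0 : 0 ≤ C := le_trans (abs_nonneg _) (hC 0)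
  set b : ℝ := (2 * σ ^ 2)⁻¹ with hb
  have hb0 : 0 < b := by positivity
  set a : ℝ := 1 + 2 * b with ha
  have ha0 : 0 < a := by positivity
  -- the dominating function
  set bound : ℝ → ℝ := fun x => (C / σ ^ 2) * c * Real.exp (a ^ 2 / (2 * b)) *
      Real.exp (-(b/2) * (x - θ)^2) with hbound_def
  have key : ∀ x : ℝ, ∀ t ∈ Metric.ball θ 1,
      ‖F x * ((x - t) / σ ^ 2 * gaussianPDFReal t (σ^2).toNNReal x)‖ ≤ bound x := by
    intro x t ht
    rw [Metric.mem_ball, Real.dist_eq] at ht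
    rw [hp]
    set u : ℝ := x - θ with hu
    have hw : x - t = u - (t - θ) := by ring
    have hs1 : |t - θ| < 1 := ht
    have h1 : |x - t| ≤ |u| + 1 := by
      rw [hw]
      calc |u - (t - θ)| ≤ |u| + |t - θ| := abs_sub _ _
        _ ≤ |u| + 1 := by linarith
    have h2 : u ^ 2 - 2 * |u| ≤ (x - t) ^ 2 := by
      rw [hw]
      have h3 : |u * (t - θ)| ≤ |u| * 1 := by
        rw [abs_mul]
        exact mul_le_mul_of_nonneg_left hs1.le (abs_nonneg _)
      have h4 : u * (t - θ) ≤ |u| := le_trans (le_abs_self _) (by simpa using h3)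
      nlinarith [sq_nonneg (t - θ), h4]
    have hexp1 : Real.exp (-(x - t)^2 / (2 * σ^2)) ≤ Real.exp (-b * u^2 + 2*b*|u|) := by
      apply Real.exp_le_exp.2
      rw [div_eq_mul_inv, ← hb]
      nlinarith [h2, hb0.le]
    have h5 : |x - t| * Real.exp (-(x-t)^2 / (2*σ^2))
        ≤ Real.exp (a^2/(2*b)) * Real.exp (-(b/2) * u^2) := by
      calc |x - t| * Real.exp (-(x-t)^2 / (2*σ^2))
          ≤ (|u| + 1) * Real.exp (-b * u^2 + 2*b*|u|) := by
            exact mul_le_mul h1 hexp1 (Real.exp_nonneg _) (by positivity)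
        _ ≤ Real.exp |u| * Real.exp (-b * u^2 + 2*b*|u|) := by
            apply mul_le_mul_of_nonneg_right _ (Real.exp_nonneg _)
            linarith [Real.add_one_le_exp |u|]
        _ = Real.exp (-b * u^2 + a * |u|) := by
            rw [← Real.exp_add, ha]; ring_nf
        _ ≤ Real.exp (a^2/(2*b)) * Real.exp (-(b/2) * u^2) := by
            rw [← Real.exp_add]
            apply Real.exp_le_exp.2
            have h8 : (b/2) * u^2 - a * |u| + a^2/(2*b)
                = (b^2 * |u|^2 - 2*a*b*|u| + a^2) / (2*b) := by
              rw [sq_abs]; field_simp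
            have h7 : (b/2) * u^2 - a * |u| + a^2/(2*b) ≥ 0 := by
              rw [h8]
              apply div_nonneg _ (by positivity)
              nlinarith [sq_nonneg (b * |u| - a)]
            linarith
    rw [norm_mul, norm_mul, Real.norm_eq_abs, Real.norm_eq_abs, Real.norm_eq_abs]
    rw [abs_div, abs_of_pos hσ2, abs_of_nonneg (mul_nonneg hc0 (Real.exp_nonneg _))]
    calc |F x| * (|x - t| / σ^2 * (c * Real.exp (-(x-t)^2/(2*σ^2))))
        ≤ C * (|x - t| / σ^2 * (c * Real.exp (-(x-t)^2/(2*σ^2)))) := by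
          apply mul_le_mul_of_nonneg_right (hC x)
          positivity
      _ = (C / σ^2) * c * (|x - t| * Real.exp (-(x-t)^2/(2*σ^2))) := by ring
      _ ≤ (C / σ^2) * c * (Real.exp (a^2/(2*b)) * Real.exp (-(b/2) * u^2)) := by
          apply mul_le_mul_of_nonneg_left h5 (by positivity)
      _ = bound x := by rw [hbound_def]; ring
  have bound_int : Integrable bound := by
    have : Integrable (fun x : ℝ => Real.exp (-(b/2) * x^2)) := integrable_exp_neg_mul_sq (by positivity)
    exact ((this.comp_sub_right θ).const_mul _)
  have hdiff : ∀ x : ℝ, ∀ t : ℝ, HasDerivAt (fun t => F x * gaussianPDFReal t (σ^2).toNNReal x)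
      (F x * ((x - t) / σ ^ 2 * gaussianPDFReal t (σ^2).toNNReal x)) t := by
    intro x t
    have h1 : HasDerivAt (fun t : ℝ => x - t) (-1) t := (hasDerivAt_id t).const_sub x
    have h2 : HasDerivAt (fun t : ℝ => (x - t)^2) (2 * (x - t)^(2-1) * (-1)) t := h1.pow 2
    have h3 : HasDerivAt (fun t : ℝ => -(x - t)^2 / (2 * σ^2))
        (-(2 * (x - t)^(2-1) * (-1)) / (2 * σ^2)) t := (h2.neg).div_const _
    have h4 := h3.exp
    have h5 := (h4.const_mul c).const_mul (F x)
    simp only [hp]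
    convert h5 using 1
    case e'_9 =>
      field_simp
      ring
    all_goals rfl
  have main := hasDerivAt_integral_of_dominated_loc_of_deriv_le (Metric.ball_mem_nhds θ zero_lt_one)
    (Filter.Eventually.of_forall fun t =>
      ((hF_meas.mul ((measurable_gaussianPDFReal t _))).aestronglyMeasurable))
    (Integrable.bdd_mul (integrable_gaussianPDFReal θ _) hF_meas.aestronglyMeasurable
      (Filter.Eventually.of_forall fun x => by rw [Real.norm_eq_abs]; exact hC x))
    ((hF_meas.mul (((measurable_id.sub measurable_const).div_const _).mul
      (measurable_gaussianPDFReal θ _))).aestronglyMeasurable)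
    (Filter.Eventually.of_forall fun x t ht => key x t ht)
    bound_int
    (Filter.Eventually.of_forall fun x t _ => hdiff x t)
  exact main

end helpers

/-- The Monte-Carlo estimator `g(ε) = (1/(mσ²)) Σ_k ε_k · F(θ + ε_k)`, with `ε_1, …, ε_m`
i.i.d. `N(0, σ²)` samples, is an unbiased estimator of the gradient of the smoothed objective
`θ ↦ ∫ F(θ + ε) d(gaussianReal 0 σ²)(ε)`. -/
theorem monte_carlo_gradient_unbiased
    (σ : ℝ) (hσ : 0 < σ) (m : ℕ) (hm : 1 ≤ m) (θ : ℝ) (F : ℝ → ℝ)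
    (hF_meas : Measurable F) (hF_bdd : ∃ C : ℝ, ∀ x, |F x| ≤ C) :
    ∫ ε : Fin m → ℝ,
        (1 / (m * σ ^ 2)) * ∑ k : Fin m, ε k * F (θ + ε k)
        ∂(Measure.pi fun _ : Fin m => gaussianReal 0 (Real.toNNReal (σ ^ 2)))
      =
      deriv (fun t : ℝ => ∫ ε, F (t + ε) ∂(gaussianReal 0 (Real.toNNReal (σ ^ 2)))) θ := by
  obtain ⟨C, hC⟩ := hF_bdd
  have hσ2 : (0:ℝ) < σ ^ 2 := by positivity
  set v : ℝ≥0 := (σ ^ 2).toNNReal with hv_def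
  have vr : ((v : ℝ≥0) : ℝ) = σ ^ 2 := Real.coe_toNNReal _ (sq_nonneg σ)
  have hv : v ≠ 0 := by
    simp only [hv_def, ne_eq, Real.toNNReal_eq_zero, not_le]
    exact hσ2
  obtain ⟨hint', hderiv⟩ := hasDerivAt_smoothed σ hσ θ F hF_meas hC
  set γ : Measure ℝ := gaussianReal 0 v with hγ_def
  -- RHS: rewrite smoothed objective as Lebesgue integral against pdf
  have hG : (fun t : ℝ => ∫ ε, F (t + ε) ∂γ)
      = fun t => ∫ x, F x * gaussianPDFReal t v x := by
    funext t
    have hmap : γ.map (t + ·) = gaussianReal t v := by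
      rw [hγ_def, gaussianReal_map_const_add, zero_add]
    have h1 : ∫ ε, F (t + ε) ∂γ = ∫ x, F x ∂(gaussianReal t v) := by
      rw [← hmap, integral_map (by fun_prop) hF_meas.aestronglyMeasurable]
    rw [h1, integral_gaussianReal_pdf t hv F]
    exact integral_congr_ae (Filter.Eventually.of_forall fun x => mul_comm _ _)
  have hRHS : deriv (fun t : ℝ => ∫ ε, F (t + ε) ∂γ) θ
      = ∫ x, F x * ((x - θ) / σ ^ 2 * gaussianPDFReal θ v x) := by
    rw [hG]
    exact hderiv.deriv
  -- the single-sample function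
  set g : ℝ → ℝ := fun x => x * F (θ + x) with hg_def
  have hg_meas : Measurable g := by
    apply measurable_id.mul
    exact hF_meas.comp (measurable_const.add measurable_id)
  have hshift : ∀ x : ℝ, gaussianPDFReal θ v (x + θ) = gaussianPDFReal 0 v x := by
    intro x
    rw [gaussianPDFReal_add x θ, sub_self]
  -- key integrals
  have hJ_int : Integrable (fun x => F x * ((x - θ) * gaussianPDFReal θ v x)) := by
    apply (hint'.const_mul (σ ^ 2)).congr
    filter_upwards with x
    field_simp
    rfl
  have hg_int : Integrable g γ := by
    rw [hγ_def, integrable_gaussianReal_pdf_iff 0 hv hg_meas.aestronglyMeasurable]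
    apply (hJ_int.comp_add_right θ).congr
    filter_upwards with x
    simp only [hg_def, hshift x]
    ring_nf
  have hJ : ∫ x, F x * ((x - θ) * gaussianPDFReal θ v x) = ∫ x, g x ∂γ := by
    rw [hγ_def, integral_gaussianReal_pdf 0 hv g,
      ← integral_add_right_eq_self (fun y => F y * ((y - θ) * gaussianPDFReal θ v y)) θ]
    congr 1
    funext x
    simp only [hg_def, hshift x]
    ring_nf
  -- marginals of the product measure
  have hmapk : ∀ k : Fin m, (Measure.pi fun _ : Fin m => γ).map (fun ε => ε k) = γ :=
    fun k => pi_map_eval γ k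
  have hpi_int : ∀ k : Fin m,
      Integrable (fun ε : Fin m → ℝ => ε k * F (θ + ε k)) (Measure.pi fun _ : Fin m => γ) := by
    intro k
    have h : Integrable g ((Measure.pi fun _ : Fin m => γ).map (fun ε => ε k)) := by
      rw [hmapk k]; exact hg_int
    exact (integrable_map_measure hg_meas.aestronglyMeasurable
      (measurable_pi_apply k).aemeasurable).mp h
  have hpi_val : ∀ k : Fin m,
      ∫ ε : Fin m → ℝ, ε k * F (θ + ε k) ∂(Measure.pi fun _ : Fin m => γ) = ∫ x, g x ∂γ := by
    intro k
    have h := integral_map (μ := Measure.pi fun _ : Fin m => γ) (φ := fun ε => ε k)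
      (measurable_pi_apply k).aemeasurable hg_meas.aestronglyMeasurable
    rw [hmapk k] at h
    exact h.symm
  -- assemble
  have hm0 : (m : ℝ) ≠ 0 := Nat.cast_ne_zero.mpr (by omega)
  calc ∫ ε : Fin m → ℝ, (1 / (m * σ ^ 2)) * ∑ k : Fin m, ε k * F (θ + ε k)
        ∂(Measure.pi fun _ : Fin m => γ)
      = (1 / (m * σ ^ 2)) * ∫ ε : Fin m → ℝ, ∑ k : Fin m, ε k * F (θ + ε k)
        ∂(Measure.pi fun _ : Fin m => γ) := integral_const_mul _ _
    _ = (1 / (m * σ ^ 2)) * ∑ k : Fin m, ∫ ε : Fin m → ℝ, ε k * F (θ + ε k)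
        ∂(Measure.pi fun _ : Fin m => γ) := by
        rw [integral_finset_sum _ (fun k _ => hpi_int k)]
    _ = (1 / (m * σ ^ 2)) * ∑ _k : Fin m, ∫ x, g x ∂γ := by
        congr 1
        exact Finset.sum_congr rfl fun k _ => hpi_val k
    _ = (1 / σ ^ 2) * ∫ x, g x ∂γ := by
        rw [Finset.sum_const, Finset.card_univ, Fintype.card_fin, nsmul_eq_mul]
        field_simp
    _ = (1 / σ ^ 2) * ∫ x, F x * ((x - θ) * gaussianPDFReal θ v x) := by rw [hJ]
    _ = ∫ x, F x * ((x - θ) / σ ^ 2 * gaussianPDFReal θ v x) := by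
        rw [← integral_const_mul]
        congr 1
        funext x
        field_simp
    _ = deriv (fun t : ℝ => ∫ ε, F (t + ε) ∂γ) θ := (hRHS).symm
end

section
/- Let σ > 0, let ν be a probability measure on ℝ (the sampling distribution of the neighboring population's parameter), and let F : ℝ × ℝ → ℝ be bounded and measurable. Define the expected joint fitness g(θ) = ∫∫ F(x, y) d(gaussianReal θ σ²)(x) dν(y). Then g is differentiable at every θ, and g'(θ) = ∫∫ ((x − θ)/σ²) · F(x, y) d(gaussianReal θ σ²)(x) dν(y). In particular, the co-evolutionary gradient with respect to one population's parameter has the same score-function form as in the single-population case: ∇_{θ_i} E[F_i(ς_i')] = E[∇_{θ_i} log p(θ_i') · F_i(ς_i')], where the expectation is over the independent joint distribution of the population's parameter θ_i' and its neighbors' parameters. -/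
open MeasureTheory ProbabilityTheory

-- derivative of gaussian pdf in the mean
lemma pdf_hasDerivAt (v : NNReal) (x t : ℝ) (hv : (v:ℝ) ≠ 0) :
    HasDerivAt (fun t : ℝ => gaussianPDFReal t v x)
      (((x - t) / v) * gaussianPDFReal t v x) t := by
  simp only [gaussianPDFReal_def]
  have h1 : HasDerivAt (fun t : ℝ => -(x - t)^2 / (2*v)) ((x - t)/v) t := by
    have : HasDerivAt (fun t : ℝ => (x - t)^2) (2*(x-t)*(-1)) t := by
      exact (((hasDerivAt_id t).const_sub x).pow 2).congr_deriv (by simp [id])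
    have := (this.neg).div_const (2*(v:ℝ))
    refine this.congr_deriv ?_
    field_simp
  have h2 := h1.exp
  have h3 := h2.const_mul ((Real.sqrt (2 * Real.pi * v))⁻¹)
  refine h3.congr_deriv ?_
  ring

-- integral against gaussianReal as integral against pdf
lemma gauss_integral (t : ℝ) (v : NNReal) (hv : v ≠ 0) (f : ℝ → ℝ) :
    ∫ x, f x ∂(gaussianReal t v) = ∫ x, gaussianPDFReal t v x * f x := by
  rw [gaussianReal_of_var_ne_zero _ hv]
  have : gaussianPDF t v = fun x => ((Real.toNNReal (gaussianPDFReal t v x) : NNReal) : ENNReal) := by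
    funext x; simp [gaussianPDF, ENNReal.ofReal]
  rw [this, integral_withDensity_eq_integral_smul]
  · congr 1; funext x
    simp [NNReal.smul_def, Real.coe_toNNReal _ (gaussianPDFReal_nonneg t v x)]
  · exact (measurable_gaussianPDFReal t v).real_toNNReal

/-- Score-function form of the co-evolutionary gradient with respect to one population's
parameter: with the neighbor's parameter sampled from a probability measure `ν` independently
of the population's Gaussian parameter, the expected joint fitness
`g(θ) = ∫∫ F(x, y) d(gaussianReal θ σ²)(x) dν(y)` is differentiable at every `θ` with
`g'(θ) = ∫∫ ((x − θ)/σ²) · F(x, y) d(gaussianReal θ σ²)(x) dν(y)`. -/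
theorem coevolutionary_joint_fitness_hasDerivAt_score
    (σ : ℝ) (hσ : 0 < σ) (ν : Measure ℝ) [IsProbabilityMeasure ν]
    (F : ℝ × ℝ → ℝ) (hF_meas : Measurable F) (hF_bdd : ∃ C : ℝ, ∀ p, |F p| ≤ C) (θ : ℝ) :
    HasDerivAt
      (fun t : ℝ => ∫ y, ∫ x, F (x, y) ∂(gaussianReal t (Real.toNNReal (σ ^ 2))) ∂ν)
      (∫ y, ∫ x, ((x - θ) / σ ^ 2) * F (x, y)
        ∂(gaussianReal θ (Real.toNNReal (σ ^ 2))) ∂ν) θ := by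
  obtain ⟨C, hC⟩ := hF_bdd
  have hC0 : 0 ≤ C := le_trans (abs_nonneg _) (hC (0, 0))
  set v : NNReal := Real.toNNReal (σ ^ 2) with hv_def
  have hvR : (v : ℝ) = σ ^ 2 := Real.coe_toNNReal _ (sq_nonneg σ)
  have hvpos : (0:ℝ) < (v:ℝ) := by rw [hvR]; positivity
  have hv : v ≠ 0 := by
    intro h; rw [h] at hvR; simp at hvR; nlinarith
  set μ : Measure (ℝ × ℝ) := ν.prod volume with hμ_def
  set H : ℝ → ℝ × ℝ → ℝ := fun t p => gaussianPDFReal t v p.2 * F (p.2, p.1) with hH_def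
  set H' : ℝ → ℝ × ℝ → ℝ :=
    fun t p => (((p.2 - t) / v) * gaussianPDFReal t v p.2) * F (p.2, p.1) with hH'_def
  -- measurability
  have hswap : Measurable fun p : ℝ × ℝ => F (p.2, p.1) := hF_meas.comp measurable_swap
  have hHmeas : ∀ t, Measurable (H t) := fun t =>
    ((measurable_gaussianPDFReal t v).comp measurable_snd).mul hswap
  have hH'meas : ∀ t, Measurable (H' t) := fun t => by
    refine Measurable.mul (Measurable.mul ?_ ((measurable_gaussianPDFReal t v).comp measurable_snd)) hswap
    exact (measurable_snd.sub measurable_const).div_const _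
  -- integrability of H t
  have hHint : ∀ t, Integrable (H t) μ := by
    intro t
    have hdom : Integrable (fun p : ℝ × ℝ => (1:ℝ) * (C * gaussianPDFReal t v p.2)) μ :=
      (integrable_const (1:ℝ)).mul_prod ((integrable_gaussianPDFReal t v).const_mul C)
    refine Integrable.mono' hdom ((hHmeas t).aestronglyMeasurable) ?_
    refine Filter.Eventually.of_forall fun p => ?_
    have h1 : |gaussianPDFReal t v p.2 * F (p.2, p.1)| =
        gaussianPDFReal t v p.2 * |F (p.2, p.1)| := by
      rw [abs_mul, abs_of_nonneg (gaussianPDFReal_nonneg _ _ _)]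
    simp only [H, Real.norm_eq_abs, h1, one_mul]
    rw [mul_comm C _]
    exact mul_le_mul_of_nonneg_left (hC _) (gaussianPDFReal_nonneg _ _ _)
  -- the statement function equals the product integral
  have hg_eq : ∀ t, (∫ y, ∫ x, F (x, y) ∂(gaussianReal t v) ∂ν) = ∫ p, H t p ∂μ := by
    intro t
    rw [integral_prod _ (hHint t)]
    refine integral_congr_ae (Filter.Eventually.of_forall fun y => ?_)
    beta_reduce
    simp only [H]
    exact gauss_integral t v hv fun x => F (x, y)
  -- dominating function for the derivative
  set c0 : ℝ := (Real.sqrt (2 * Real.pi * v))⁻¹ with hc0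
  have hc0nn : 0 ≤ c0 := by positivity
  set bound : ℝ × ℝ → ℝ :=
    fun p => (1:ℝ) * ((C / v * c0 * Real.exp (1/(2*v))) *
      ((|p.2 - θ| + 1) * Real.exp (-((4*(v:ℝ))⁻¹) * (p.2 - θ)^2))) with hbound_def
  have hb4 : (0:ℝ) < (4*(v:ℝ))⁻¹ := by positivity
  have hbound_int : Integrable bound μ := by
    have h1 : Integrable (fun x : ℝ => (|x| + 1) * Real.exp (-((4*(v:ℝ))⁻¹) * x^2)) := by
      have ha : Integrable (fun x : ℝ => |x| * Real.exp (-((4*(v:ℝ))⁻¹) * x^2)) := by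
        have := (integrable_mul_exp_neg_mul_sq hb4).abs
        refine this.congr (Filter.Eventually.of_forall fun x => ?_)
        simp only [abs_mul, abs_of_nonneg (Real.exp_nonneg _)]
      have hb := integrable_exp_neg_mul_sq hb4
      have := ha.add hb
      refine this.congr (Filter.Eventually.of_forall fun x => ?_)
      simp only [Pi.add_apply]
      ring
    have h2 := h1.comp_sub_right θ
    exact (integrable_const (1:ℝ)).mul_prod (h2.const_mul _)
  -- pointwise bound for t in ball θ 1
  have hbnd : ∀ᵐ p ∂μ, ∀ t ∈ Metric.ball θ 1, ‖H' t p‖ ≤ bound p := by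
    refine Filter.Eventually.of_forall fun p t ht => ?_
    set a := p.2
    have htθ : |t - θ| < 1 := by simpa [Real.dist_eq] using ht
    have hpdf_eq : gaussianPDFReal t v a = c0 * Real.exp (-(a - t)^2 / (2*(v:ℝ))) := rfl
    have hexp : Real.exp (-(a - t)^2 / (2*(v:ℝ))) ≤
        Real.exp (1/(2*(v:ℝ))) * Real.exp (-((4*(v:ℝ))⁻¹) * (a - θ)^2) := by
      rw [← Real.exp_add]
      refine Real.exp_le_exp.mpr ?_
      have key : (a - θ)^2 ≤ 2 * (a - t)^2 + 2 * (t - θ)^2 := by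
        nlinarith [sq_nonneg (a - t - (t - θ))]
      have h2 : (t - θ)^2 ≤ 1 := by nlinarith [abs_nonneg (t - θ), sq_abs (t - θ)]
      have heq : 1/(2*(v:ℝ)) + (-((4*(v:ℝ))⁻¹) * (a - θ)^2) - (-(a - t)^2 / (2*(v:ℝ)))
          = (2 + 2*(a - t)^2 - (a - θ)^2) / (4*(v:ℝ)) := by
        field_simp
        ring
      have hnum : 0 ≤ (2 + 2*(a - t)^2 - (a - θ)^2) / (4*(v:ℝ)) :=
        div_nonneg (by nlinarith) (by positivity)
      linarith [heq ▸ hnum]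
    have hpdf_le : gaussianPDFReal t v a ≤
        c0 * Real.exp (1/(2*v)) * Real.exp (-((4*(v:ℝ))⁻¹) * (a - θ)^2) := by
      rw [hpdf_eq, mul_assoc]
      exact mul_le_mul_of_nonneg_left hexp hc0nn
    have habs : ‖H' t p‖ = |(a - t) / v| * gaussianPDFReal t v a * |F (a, p.1)| := by
      simp only [H', Real.norm_eq_abs, abs_mul, abs_of_nonneg (gaussianPDFReal_nonneg _ _ _)]
      rfl
    rw [habs]
    have h1 : |(a - t) / v| ≤ (|a - θ| + 1) / v := by
      rw [abs_div, abs_of_nonneg hvpos.le]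
      gcongr
      have heq : a - t = (a - θ) + (θ - t) := by ring
      rw [heq]
      refine (abs_add_le _ _).trans ?_
      rw [abs_sub_comm θ t]
      linarith
    calc |(a - t) / v| * gaussianPDFReal t v a * |F (a, p.1)|
        ≤ ((|a - θ| + 1) / v) * (c0 * Real.exp (1/(2*v)) * Real.exp (-((4*(v:ℝ))⁻¹) * (a - θ)^2)) * C := by
          refine mul_le_mul (mul_le_mul h1 hpdf_le (gaussianPDFReal_nonneg _ _ _) (by positivity)) (hC _) (abs_nonneg _) ?_
          positivity
      _ = bound p := by simp only [bound]; ring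
  -- differentiability a.e.
  have hdiff : ∀ᵐ p ∂μ, ∀ t ∈ Metric.ball θ 1, HasDerivAt (fun t => H t p) (H' t p) t := by
    refine Filter.Eventually.of_forall fun p t _ => ?_
    exact (pdf_hasDerivAt v p.2 t hvpos.ne').mul_const _
  -- apply dominated derivative theorem
  have main := hasDerivAt_integral_of_dominated_loc_of_deriv_le (μ := μ)
    (F := H) (F' := H') (x₀ := θ) (bound := bound) (Metric.ball_mem_nhds θ one_pos)
    (Filter.Eventually.of_forall fun t => (hHmeas t).aestronglyMeasurable)
    (hHint θ) ((hH'meas θ).aestronglyMeasurable) hbnd hbound_int hdiff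
  obtain ⟨hH'int, hder⟩ := main
  have hfun : (fun t : ℝ => ∫ y, ∫ x, F (x, y) ∂(gaussianReal t v) ∂ν) =
      fun t => ∫ p, H t p ∂μ := funext hg_eq
  rw [hfun]
  refine hder.congr_deriv ?_
  symm
  rw [integral_prod _ hH'int]
  refine integral_congr_ae (Filter.Eventually.of_forall fun y => ?_)
  beta_reduce
  rw [gauss_integral θ v hv (fun x => ((x - θ) / σ ^ 2) * F (x, y))]
  refine integral_congr_ae (Filter.Eventually.of_forall fun x => ?_)
  beta_reduce
  simp only [H', hvR]
  ring
end

section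
/- Let σ > 0, m ≥ 1, and θ_i, θ_c ∈ ℝ. Let F : ℝ × ℝ → ℝ be bounded and measurable, and let the m sample pairs (ε_i^k, ε_c^k), k = 1, …, m, be i.i.d., each pair distributed as the product measure (gaussianReal 0 σ²) × (gaussianReal 0 σ²). Let q denote the Gaussian density gaussianPDFReal 0 σ. Then the rescaled co-evolutionary gradient estimator g = (1/(m σ²)) · Σ_{k=1}^m F(θ_i + ε_i^k, θ_c + ε_c^k) · ε_i^k · q(ε_c^k) is unbiased for the rectified gradient: its expectation equals the derivative at θ_i of the map θ ↦ ∫∫ F(θ + x, θ_c + y) · q(y) d(gaussianReal 0 σ²)(x) d(gaussianReal 0 σ²)(y). -/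
open MeasureTheory ProbabilityTheory

open Real Filter Metric
open scoped NNReal ENNReal

lemma my_integral_gaussianReal {v : ℝ≥0} (hv : v ≠ 0) (μ : ℝ) (f : ℝ → ℝ) :
    ∫ x, f x ∂(gaussianReal μ v) = ∫ x, gaussianPDFReal μ v x * f x := by
  rw [gaussianReal_of_var_ne_zero μ hv]
  have h : gaussianPDF μ v = fun x => ((gaussianPDFReal μ v x).toNNReal : ℝ≥0∞) := rfl
  rw [h, integral_withDensity_eq_integral_smul
    (by exact (measurable_gaussianPDFReal μ v).real_toNNReal)]
  congr 1
  ext x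
  simp [NNReal.smul_def, Real.coe_toNNReal _ (gaussianPDFReal_nonneg μ v x)]

lemma my_integrable_gaussianReal {v : ℝ≥0} (hv : v ≠ 0) (μ : ℝ) (f : ℝ → ℝ) :
    Integrable f (gaussianReal μ v) ↔
      Integrable (fun x => gaussianPDFReal μ v x * f x) volume := by
  rw [gaussianReal_of_var_ne_zero μ hv]
  have h : gaussianPDF μ v = fun x => ((gaussianPDFReal μ v x).toNNReal : ℝ≥0∞) := rfl
  rw [h, integrable_withDensity_iff_integrable_smul
    (by exact (measurable_gaussianPDFReal μ v).real_toNNReal)]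
  constructor <;> intro hh <;>
  · refine hh.congr (Filter.Eventually.of_forall fun x => ?_)
    simp [NNReal.smul_def, Real.coe_toNNReal _ (gaussianPDFReal_nonneg μ v x)]

lemma my_pdf_le (v : ℝ≥0) (μ : ℝ) (x : ℝ) :
    gaussianPDFReal μ v x ≤ (Real.sqrt (2 * π * v))⁻¹ := by
  rw [gaussianPDFReal]
  nth_rewrite 2 [← mul_one (Real.sqrt (2 * π * v))⁻¹]
  gcongr
  refine Real.exp_le_one_iff.mpr (div_nonpos_of_nonpos_of_nonneg ?_ ?_)
  · exact neg_nonpos.2 (sq_nonneg _)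
  · positivity

lemma my_pdf_hasDeriv (v : ℝ≥0) (hv : v ≠ 0) (u t : ℝ) :
    HasDerivAt (fun s => gaussianPDFReal s v u)
      (((u - t) / (v : ℝ)) * gaussianPDFReal t v u) t := by
  have hvpos : (0:ℝ) < v := by positivity
  have h1 : HasDerivAt (fun s : ℝ => u - s) (-1) t := (hasDerivAt_id t).const_sub u
  have h2 : HasDerivAt (fun s : ℝ => -(u - s)^2 / (2 * (v:ℝ)))
      ((u - t) / (v:ℝ)) t := by
    have := ((h1.pow 2).neg).div_const (2 * (v:ℝ))
    refine this.congr_deriv ?_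
    field_simp
    ring
  have h3 := (h2.exp).const_mul (Real.sqrt (2 * π * v))⁻¹
  simp only [gaussianPDFReal]
  refine h3.congr_deriv ?_
  ring

lemma my_key {v : ℝ≥0} (hv : v ≠ 0) {G : ℝ → ℝ} (hG : Measurable G) {C : ℝ}
    (hC : ∀ u, |G u| ≤ C) (θ : ℝ) :
    HasDerivAt (fun t => ∫ u, G u * gaussianPDFReal t v u)
      (∫ u, G u * (((u - θ) / (v : ℝ)) * gaussianPDFReal θ v u)) θ := by
  have hvpos : (0:ℝ) < v := by positivity
  have hC0 : 0 ≤ C := le_trans (abs_nonneg _) (hC 0)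
  set K : ℝ := (Real.sqrt (2 * π * v))⁻¹ with hK
  have hKpos : 0 < K := by positivity
  set b : ℝ := 1 / (4 * v) with hb
  have hbpos : 0 < b := by positivity
  set bound : ℝ → ℝ :=
    fun u => (C * K * Real.exp (1 / (2 * v)) / v) *
      ((|u - θ| + 1) * Real.exp (-b * (u - θ)^2)) with hbound
  have bound_int : Integrable bound := by
    have h1 : Integrable (fun x : ℝ => |x| * Real.exp (-b * x^2)) := by
      refine (integrable_mul_exp_neg_mul_sq hbpos).abs.congr
        (Filter.Eventually.of_forall fun x => ?_)
      simp [abs_mul, abs_of_pos (Real.exp_pos _)]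
    have h2 := integrable_exp_neg_mul_sq hbpos
    have h3 : Integrable (fun x : ℝ => (|x| + 1) * Real.exp (-b * x^2)) := by
      refine (h1.add h2).congr (Filter.Eventually.of_forall fun x => ?_)
      simp only [Pi.add_apply]
      ring
    exact ((h3.comp_sub_right θ)).const_mul _
  have hmeas : ∀ t : ℝ, AEStronglyMeasurable (fun u => G u * gaussianPDFReal t v u) volume :=
    fun t => (hG.mul (measurable_gaussianPDFReal t v)).aestronglyMeasurable
  have hint : Integrable (fun u => G u * gaussianPDFReal θ v u) := by
    refine Integrable.mono' ((integrable_gaussianPDFReal θ v).const_mul C)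
      (hmeas θ) (Filter.Eventually.of_forall fun u => ?_)
    rw [Real.norm_eq_abs, abs_mul, abs_of_nonneg (gaussianPDFReal_nonneg _ _ _)]
    exact mul_le_mul_of_nonneg_right (hC u) (gaussianPDFReal_nonneg _ _ _)
  have h := hasDerivAt_integral_of_dominated_loc_of_deriv_le
    (F := fun t u => G u * gaussianPDFReal t v u)
    (F' := fun t u => G u * (((u - t) / (v : ℝ)) * gaussianPDFReal t v u))
    (bound := bound) (Metric.ball_mem_nhds θ one_pos)
    (Filter.Eventually.of_forall hmeas) hint
    (by
      exact ((hG.mul ((measurable_id.sub_const θ).div_const _ |>.mul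
        (measurable_gaussianPDFReal θ v)))).aestronglyMeasurable)
    (Filter.Eventually.of_forall fun u => ?_)
    bound_int
    (Filter.Eventually.of_forall fun u t _ => (my_pdf_hasDeriv v hv u t).const_mul (G u))
  · exact h.2
  · intro t ht
    rw [Real.norm_eq_abs, abs_mul, abs_mul,
      abs_of_nonneg (gaussianPDFReal_nonneg _ _ _)]
    have htθ : |t - θ| < 1 := by
      rw [Metric.mem_ball, Real.dist_eq] at ht; exact ht
    have hb2 : (t - θ)^2 < 1 := by nlinarith [abs_lt.mp htθ]
    have h1 : |(u - t) / (v:ℝ)| ≤ (|u - θ| + 1) / v := by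
      rw [abs_div, abs_of_pos hvpos]
      gcongr
      calc |u - t| = |(u - θ) + (θ - t)| := by ring_nf
        _ ≤ |u - θ| + |θ - t| := abs_add_le _ _
        _ ≤ |u - θ| + 1 := by
            have he : |θ - t| = |t - θ| := abs_sub_comm _ _
            linarith [he ▸ htθ.le]
    have h2 : gaussianPDFReal t v u ≤ K * (Real.exp (1 / (2*(v:ℝ))) * Real.exp (-b * (u - θ)^2)) := by
      rw [gaussianPDFReal, ← Real.exp_add]
      gcongr
      rw [hb]
      have hnum : 0 ≤ 2 - (u-θ)^2 + 2*(u-t)^2 := by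
        nlinarith [sq_nonneg ((u-θ) - 2*(t-θ)), hb2]
      have e : 1/(2*(v:ℝ)) + -(1/(4*(v:ℝ))) * (u-θ)^2 - (-(u - t)^2/(2*(v:ℝ)))
          = (2 - (u-θ)^2 + 2*(u-t)^2) / (4*(v:ℝ)) := by
        field_simp
        ring
      have := div_nonneg hnum (by positivity : (0:ℝ) ≤ 4*(v:ℝ))
      linarith [e ▸ this]
    calc |G u| * (|(u - t) / (v:ℝ)| * gaussianPDFReal t v u)
        ≤ C * (((|u - θ| + 1) / v) * (K * (Real.exp (1 / (2*(v:ℝ))) * Real.exp (-b * (u - θ)^2)))) := by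
          refine mul_le_mul (hC u) (mul_le_mul h1 h2 (gaussianPDFReal_nonneg _ _ _) (by positivity))
            (mul_nonneg (abs_nonneg _) (gaussianPDFReal_nonneg _ _ _)) hC0
      _ = bound u := by rw [hbound]; ring

lemma my_map_eval_pi {m : ℕ} {α : Type*} [MeasurableSpace α] (μ : Measure α)
    [IsProbabilityMeasure μ] (k : Fin m) :
    (Measure.pi fun _ : Fin m => μ).map (Function.eval k) = μ := by
  ext s hs
  rw [Measure.map_apply (measurable_pi_apply k) hs, Set.eval_preimage, Measure.pi_pi]
  rw [Finset.prod_eq_single k]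
  · simp
  · intro j _ hj
    simp [Function.update_of_ne hj]
  · simp

lemma my_shift {v : ℝ≥0} (t : ℝ) {f : ℝ → ℝ} (hf : Measurable f) :
    ∫ x, f (t + x) ∂(gaussianReal 0 v) = ∫ u, f u ∂(gaussianReal t v) := by
  have h := gaussianReal_map_const_add (μ := 0) (v := v) t
  rw [zero_add] at h
  rw [← h, integral_map (measurable_const_add t).aemeasurable hf.aestronglyMeasurable]

-- first |x| integrable wrt gaussian
lemma my_abs_integrable {v : ℝ≥0} (hv : v ≠ 0) :
    Integrable (fun x : ℝ => |x|) (gaussianReal 0 v) := by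
  have hvpos : (0:ℝ) < v := by positivity
  rw [my_integrable_gaussianReal hv]
  have hb : (0:ℝ) < 1 / (2 * v) := by positivity
  have h1 : Integrable (fun x : ℝ => |x| * Real.exp (-(1/(2*(v:ℝ))) * x^2)) := by
    refine (integrable_mul_exp_neg_mul_sq hb).abs.congr
      (Filter.Eventually.of_forall fun x => ?_)
    simp [abs_mul, abs_of_pos (Real.exp_pos _)]
  refine (h1.const_mul (Real.sqrt (2 * π * v))⁻¹).congr
    (Filter.Eventually.of_forall fun x => ?_)
  simp only [gaussianPDFReal]
  have h : -(x - 0)^2 / (2*(v:ℝ)) = -(1/(2*(v:ℝ))) * x^2 := by ring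
  rw [h]
  ring


/-- Unbiasedness of the rescaled co-evolutionary gradient estimator: with `m` i.i.d. sample
pairs `(ε_i^k, ε_c^k) ∼ N(0,σ²) × N(0,σ²)` and `q` the `N(0,σ²)` Gaussian density, the
estimator `g = (1/(mσ²)) Σ_k F(θ_i + ε_i^k, θ_c + ε_c^k) · ε_i^k · q(ε_c^k)` has expectation
equal to the derivative at `θ_i` of
`θ ↦ ∫∫ F(θ + x, θ_c + y) · q(y) d(gaussianReal 0 σ²)(x) d(gaussianReal 0 σ²)(y)`. -/
theorem rescaled_coevolutionary_gradient_unbiased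
    (σ : ℝ) (hσ : 0 < σ) (m : ℕ) (hm : 1 ≤ m) (θi θc : ℝ)
    (F : ℝ × ℝ → ℝ) (hF_meas : Measurable F) (hF_bdd : ∃ C : ℝ, ∀ p, |F p| ≤ C) :
    ∫ ω : Fin m → ℝ × ℝ,
        (1 / (m * σ ^ 2)) *
          ∑ k : Fin m,
            F (θi + (ω k).1, θc + (ω k).2) * (ω k).1 *
              gaussianPDFReal 0 (Real.toNNReal (σ ^ 2)) (ω k).2
        ∂(Measure.pi fun _ : Fin m =>
            (gaussianReal 0 (Real.toNNReal (σ ^ 2))).prod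
              (gaussianReal 0 (Real.toNNReal (σ ^ 2))))
      =
      deriv
        (fun t : ℝ =>
          ∫ y, ∫ x, F (t + x, θc + y) * gaussianPDFReal 0 (Real.toNNReal (σ ^ 2)) y
            ∂(gaussianReal 0 (Real.toNNReal (σ ^ 2)))
            ∂(gaussianReal 0 (Real.toNNReal (σ ^ 2)))) θi := by
  obtain ⟨C, hC⟩ := hF_bdd
  have hC0 : 0 ≤ C := le_trans (abs_nonneg _) (hC (0, 0))
  set v : ℝ≥0 := Real.toNNReal (σ ^ 2) with hvdef
  have hσ2 : (0:ℝ) < σ ^ 2 := by positivity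
  have hvco : (v : ℝ) = σ ^ 2 := Real.coe_toNNReal _ (le_of_lt hσ2)
  have hv : v ≠ 0 := by
    intro h
    rw [h] at hvco
    simp only [NNReal.coe_zero] at hvco
    linarith
  have hvpos : (0:ℝ) < v := by rw [hvco]; exact hσ2
  set γ : Measure ℝ := gaussianReal 0 v with hγdef
  set q : ℝ → ℝ := gaussianPDFReal 0 v with hqdef
  have hq_meas : Measurable q := measurable_gaussianPDFReal 0 v
  set Cq : ℝ := (Real.sqrt (2 * π * v))⁻¹ with hCqdef
  have hCqpos : 0 < Cq := by positivity
  have hq_le : ∀ y, q y ≤ Cq := fun y => my_pdf_le v 0 y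
  have hq_nonneg : ∀ y, 0 ≤ q y := fun y => gaussianPDFReal_nonneg 0 v y
  -- the auxiliary bounded measurable function G
  set G : ℝ → ℝ := fun u => ∫ y, F (u, θc + y) * q y ∂γ with hGdef
  have hFy_meas : Measurable (fun p : ℝ × ℝ => F (p.1, θc + p.2) * q p.2) :=
    (hF_meas.comp (measurable_fst.prodMk (measurable_const.add measurable_snd))).mul
      (hq_meas.comp measurable_snd)
  have hG_meas : Measurable G :=
    (hFy_meas.stronglyMeasurable.integral_prod_right' (ν := γ)).measurable
  have hG_bd : ∀ u, |G u| ≤ C * Cq := by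
    intro u
    have h := norm_integral_le_of_norm_le_const (μ := γ)
      (f := fun y => F (u, θc + y) * q y) (C := C * Cq)
      (Filter.Eventually.of_forall fun y => by
        rw [Real.norm_eq_abs, abs_mul, abs_of_nonneg (hq_nonneg y)]
        exact mul_le_mul (hC _) (hq_le _) (hq_nonneg _) hC0)
    simpa [measure_univ] using h
  -- Step A: rewrite the function whose derivative is taken
  have stepA : (fun t : ℝ => ∫ y, ∫ x, F (t + x, θc + y) * q y ∂γ ∂γ)
      = fun t => ∫ u, G u * gaussianPDFReal t v u := by
    funext t
    have hswap_int : Integrable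
        (Function.uncurry fun y u => gaussianPDFReal t v u * F (u, θc + y) * q y)
        (γ.prod volume) := by
      have h1 : Integrable (fun _ : ℝ => C * Cq) γ := integrable_const _
      have h2 : Integrable (fun u : ℝ => gaussianPDFReal t v u) volume :=
        integrable_gaussianPDFReal t v
      refine (h1.mul_prod h2).mono' ?_ (Filter.Eventually.of_forall fun z => ?_)
      · exact (((measurable_gaussianPDFReal t v).comp measurable_snd).mul
          (hF_meas.comp (measurable_snd.prodMk
            (measurable_const.add measurable_fst)))).mul
          (hq_meas.comp measurable_fst) |>.aestronglyMeasurable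
      · simp only [Function.uncurry]
        rw [Real.norm_eq_abs, abs_mul, abs_mul,
          abs_of_nonneg (gaussianPDFReal_nonneg t v z.2), abs_of_nonneg (hq_nonneg z.1)]
        calc gaussianPDFReal t v z.2 * |F (z.2, θc + z.1)| * q z.1
            ≤ gaussianPDFReal t v z.2 * C * Cq :=
              mul_le_mul (mul_le_mul_of_nonneg_left (hC _) (gaussianPDFReal_nonneg t v z.2))
                (hq_le _) (hq_nonneg _) (mul_nonneg (gaussianPDFReal_nonneg t v z.2) hC0)
          _ = C * Cq * gaussianPDFReal t v z.2 := by ring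
    have inner : ∀ y : ℝ, (∫ x, F (t + x, θc + y) * q y ∂γ)
        = (∫ u, gaussianPDFReal t v u * F (u, θc + y)) * q y := by
      intro y
      rw [integral_mul_const]
      congr 1
      have hfm : Measurable fun u : ℝ => F (u, θc + y) :=
        hF_meas.comp (measurable_id.prodMk measurable_const)
      rw [hγdef, my_shift t hfm, my_integral_gaussianReal hv t]
    calc ∫ y, ∫ x, F (t + x, θc + y) * q y ∂γ ∂γ
        = ∫ y, (∫ u, gaussianPDFReal t v u * F (u, θc + y)) * q y ∂γ := by
          exact integral_congr_ae (Filter.Eventually.of_forall inner)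
      _ = ∫ y, (∫ u, gaussianPDFReal t v u * F (u, θc + y) * q y) ∂γ := by
          congr 1
          funext y
          rw [← integral_mul_const]
      _ = ∫ u, ∫ y, gaussianPDFReal t v u * F (u, θc + y) * q y ∂γ := by
          exact integral_integral_swap hswap_int
      _ = ∫ u, G u * gaussianPDFReal t v u := by
          congr 1
          funext u
          calc ∫ y, gaussianPDFReal t v u * F (u, θc + y) * q y ∂γ
              = ∫ y, gaussianPDFReal t v u * (F (u, θc + y) * q y) ∂γ := by
                congr 1; funext y; ring
            _ = gaussianPDFReal t v u * ∫ y, F (u, θc + y) * q y ∂γ :=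
                integral_const_mul _ _
            _ = G u * gaussianPDFReal t v u := by rw [hGdef]; ring
  -- Step B: the derivative
  have hD := my_key hv hG_meas hG_bd θi
  have hderiv : deriv (fun t : ℝ => ∫ y, ∫ x, F (t + x, θc + y) * q y ∂γ ∂γ) θi
      = ∫ u, G u * (((u - θi) / (v : ℝ)) * gaussianPDFReal θi v u) := by
    rw [stepA]
    exact hD.deriv
  -- the estimator integrand
  set f : ℝ × ℝ → ℝ := fun p => F (θi + p.1, θc + p.2) * p.1 * q p.2 with hfdef
  have hf_meas : Measurable f :=
    ((hF_meas.comp ((measurable_const.add measurable_fst).prodMk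
      (measurable_const.add measurable_snd))).mul measurable_fst).mul
      (hq_meas.comp measurable_snd)
  have hf_int : Integrable f (γ.prod γ) := by
    have habs : Integrable (fun x : ℝ => C * |x|) γ := (my_abs_integrable hv).const_mul C
    have hcq : Integrable (fun _ : ℝ => Cq) γ := integrable_const _
    refine (habs.mul_prod hcq).mono' hf_meas.aestronglyMeasurable
      (Filter.Eventually.of_forall fun p => ?_)
    rw [Real.norm_eq_abs, hfdef]
    calc |F (θi + p.1, θc + p.2) * p.1 * q p.2|
        = |F (θi + p.1, θc + p.2)| * |p.1| * q p.2 := by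
          rw [abs_mul, abs_mul, abs_of_nonneg (hq_nonneg _)]
      _ ≤ C * |p.1| * Cq :=
          mul_le_mul (mul_le_mul_of_nonneg_right (hC _) (abs_nonneg _))
            (hq_le _) (hq_nonneg _) (mul_nonneg hC0 (abs_nonneg _))
  -- LHS computation
  have hmap : ∀ k : Fin m,
      (Measure.pi fun _ : Fin m => γ.prod γ).map (Function.eval k) = γ.prod γ :=
    fun k => my_map_eval_pi _ k
  have hint_k : ∀ k : Fin m,
      Integrable (fun ω : Fin m → ℝ × ℝ => f (ω k)) (Measure.pi fun _ => γ.prod γ) := by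
    intro k
    have h1 : Integrable f ((Measure.pi fun _ : Fin m => γ.prod γ).map (Function.eval k)) := by
      rw [hmap k]; exact hf_int
    exact (integrable_map_measure hf_meas.aestronglyMeasurable
      (measurable_pi_apply k).aemeasurable).mp h1
  have hval_k : ∀ k : Fin m,
      (∫ ω : Fin m → ℝ × ℝ, f (ω k) ∂(Measure.pi fun _ => γ.prod γ))
        = ∫ p, f p ∂(γ.prod γ) := by
    intro k
    calc (∫ ω : Fin m → ℝ × ℝ, f (ω k) ∂(Measure.pi fun _ => γ.prod γ))
        = ∫ p, f p ∂((Measure.pi fun _ : Fin m => γ.prod γ).map (Function.eval k)) :=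
          (integral_map (measurable_pi_apply k).aemeasurable
            hf_meas.aestronglyMeasurable).symm
      _ = ∫ p, f p ∂(γ.prod γ) := by rw [hmap k]
  have hm0 : (m : ℝ) ≠ 0 := by
    have : 0 < m := hm
    positivity
  have hLHS : (∫ ω : Fin m → ℝ × ℝ,
        (1 / (m * σ ^ 2)) * ∑ k : Fin m, f (ω k) ∂(Measure.pi fun _ => γ.prod γ))
      = (1 / σ ^ 2) * ∫ p, f p ∂(γ.prod γ) := by
    rw [integral_const_mul, integral_finset_sum Finset.univ (fun k _ => hint_k k)]
    rw [Finset.sum_congr rfl (fun k _ => hval_k k), Finset.sum_const, Finset.card_univ,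
      Fintype.card_fin, nsmul_eq_mul]
    field_simp
  -- identification of the two values
  have hI : (∫ p, f p ∂(γ.prod γ)) = ∫ x, G (θi + x) * x ∂γ := by
    rw [integral_prod _ hf_int]
    congr 1
    funext x
    calc ∫ y, f (x, y) ∂γ
        = ∫ y, (F (θi + x, θc + y) * q y) * x ∂γ := by
          congr 1; funext y; rw [hfdef]; ring
      _ = (∫ y, F (θi + x, θc + y) * q y ∂γ) * x := integral_mul_const _ _
      _ = G (θi + x) * x := rfl
  have hpdf_shift : ∀ u : ℝ, gaussianPDFReal θi v u = gaussianPDFReal 0 v (u - θi) := by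
    intro u
    rw [gaussianPDFReal_sub, zero_add]
  have hID : (∫ u, G u * (((u - θi) / (v : ℝ)) * gaussianPDFReal θi v u))
      = (1 / σ ^ 2) * ∫ p, f p ∂(γ.prod γ) := by
    calc (∫ u, G u * (((u - θi) / (v : ℝ)) * gaussianPDFReal θi v u))
        = ∫ u, (fun w => G w * (((w - θi) / (v : ℝ)) * gaussianPDFReal 0 v (w - θi))) u := by
          congr 1; funext u; rw [hpdf_shift u]
      _ = ∫ x, G (x + θi) * (((x + θi - θi) / (v : ℝ)) * gaussianPDFReal 0 v (x + θi - θi)) :=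
          (integral_add_right_eq_self
            (fun w => G w * (((w - θi) / (v : ℝ)) * gaussianPDFReal 0 v (w - θi))) θi).symm
      _ = ∫ x, gaussianPDFReal 0 v x * ((1 / σ ^ 2) * (G (θi + x) * x)) := by
          congr 1; funext x
          rw [add_sub_cancel_right, add_comm x θi, ← hvco]
          ring
      _ = ∫ x, (1 / σ ^ 2) * (G (θi + x) * x) ∂γ := by
          rw [hγdef, my_integral_gaussianReal hv 0]
      _ = (1 / σ ^ 2) * ∫ x, G (θi + x) * x ∂γ := integral_const_mul _ _
      _ = (1 / σ ^ 2) * ∫ p, f p ∂(γ.prod γ) := by rw [hI]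
  rw [hderiv, hID]
  exact hLHS
end
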